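/- Let X be a reflexive Banach space with dual Y, φ ∈ Γ₀(X), ε > 0, M = Graph(∂φ), A = {0} × closed-ball_Y(0,ε). Then M + A is a BB-graph if and only if for every y ∈ Y the set ⋃_{‖ȳ - y‖ ≤ ε} ∂φ*(ȳ) is convex. -/

import Mathlib

noncomputable section

/-- Convexity for `EReal`-valued functions. -/
def ConvexE {V : Type*} [AddCommGroup V] [Module ℝ V] (f : V → EReal) : Prop :=
  ∀ x₁ x₂ : V, ∀ a b : ℝ, 0 ≤ a → 0 ≤ b → a + b = 1 →
    f (a • x₁ + b • x₂) ≤ (a : EReal) * f x₁ + (b : EReal) * f x₂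

/-- `Γ₀`: proper, convex, lower semicontinuous, with values in `ℝ ∪ {+∞}`. -/
def Gamma0 {V : Type*} [AddCommGroup V] [Module ℝ V] [TopologicalSpace V]
    (f : V → EReal) : Prop :=
  (∀ v, f v ≠ ⊥) ∧ (∃ v, f v ≠ ⊤) ∧ ConvexE f ∧ LowerSemicontinuous f

/-- Subdifferential with respect to a pairing `p`. -/
def subdiffE {V W : Type*} [AddCommGroup V] [Module ℝ V]
    (p : V → W → ℝ) (f : V → EReal) (x : V) : Set W :=
  {u | ∀ z, (p (z - x) u : EReal) + f x ≤ f z}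

/-- Bipotential with respect to the duality pairing `p`. -/
def IsBipotential {X Y : Type*} [AddCommGroup X] [Module ℝ X] [TopologicalSpace X]
    [AddCommGroup Y] [Module ℝ Y] [TopologicalSpace Y]
    (p : X → Y → ℝ) (b : X → Y → EReal) : Prop :=
  (∀ x y, b x y ≠ ⊥) ∧
  (∀ x, (∃ y, b x y ≠ ⊤) → Gamma0 (b x)) ∧
  (∀ y, (∃ x, b x y ≠ ⊤) → Gamma0 (fun x => b x y)) ∧
  (∀ x y, (p x y : EReal) ≤ b x y) ∧
  (∀ x y,
    (y ∈ subdiffE p (fun x' => b x' y) x ↔ b x y = (p x y : EReal)) ∧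
    (x ∈ subdiffE (fun y' x' => p x' y') (b x) y ↔ b x y = (p x y : EReal)))

/-- The graph `M(b)` of a bipotential. -/
def MGraph {X Y : Type*} (p : X → Y → ℝ) (b : X → Y → EReal) : Set (X × Y) :=
  {q | b q.1 q.2 = (p q.1 q.2 : EReal)}

/-- Synchronised convex function (sync). -/
def IsSync {X Y : Type*} [AddCommGroup X] [Module ℝ X] [TopologicalSpace X]
    [AddCommGroup Y] [Module ℝ Y] [TopologicalSpace Y]
    (c : X → Y → EReal) : Prop :=
  (∀ x y, 0 ≤ c x y) ∧
  (∀ x, (∃ y, c x y ≠ ⊤) → Gamma0 (c x)) ∧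
  (∀ y, (∃ x, c x y ≠ ⊤) → Gamma0 (fun x => c x y)) ∧
  (∀ x, (∃ y', c x y' ≠ ⊤) → ∀ y, (∀ y', c x y ≤ c x y') → c x y = 0) ∧
  (∀ y, (∃ x', c x' y ≠ ⊤) → ∀ x, (∀ x', c x y ≤ c x' y) → c x y = 0)

/-- A BB-graph: all sections are convex and closed. -/
def IsBBGraph {X Y : Type*} [AddCommGroup X] [Module ℝ X] [TopologicalSpace X]
    [AddCommGroup Y] [Module ℝ Y] [TopologicalSpace Y] (M : Set (X × Y)) : Prop :=
  (∀ x, Convex ℝ {y | (x, y) ∈ M} ∧ IsClosed {y | (x, y) ∈ M}) ∧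
  (∀ y, Convex ℝ {x | (x, y) ∈ M} ∧ IsClosed {x | (x, y) ∈ M})

variable {X : Type*} [NormedAddCommGroup X] [NormedSpace ℝ X]

/-- Fenchel conjugate of `φ : X → ℝ ∪ {+∞}`, defined on the dual space. -/
def fenchelConj (φ : X → EReal) (y : X →L[ℝ] ℝ) : EReal :=
  ⨆ x : X, (y x : EReal) - φ x

/-- Subdifferential of `φ : X → ℝ ∪ {+∞}`, with values in the dual space. -/
def subdiff (φ : X → EReal) (x : X) : Set (X →L[ℝ] ℝ) :=
  {u | ∀ z : X, (u (z - x) : EReal) + φ x ≤ φ z}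

/-- Subdifferential of a function on the dual space, with values in `X`
(identifying `X` with its bidual via reflexivity). -/
def subdiffStar (ψ : (X →L[ℝ] ℝ) → EReal) (y : X →L[ℝ] ℝ) : Set X :=
  {x | ∀ z : X →L[ℝ] ℝ, (((z - y) x) : EReal) + ψ y ≤ ψ z}


/-! ### Auxiliary lemmas -/

open Filter Topology NormedSpace
open scoped Pointwise

set_option linter.unusedSectionVars false

lemma ereal_coe_add_top (r : ℝ) : (r : EReal) + ⊤ = ⊤ := by simp

lemma ereal_top_not_le_coe (r : ℝ) : ¬ ((⊤ : EReal) ≤ (r : EReal)) := by simp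

lemma ereal_exists_real {e : EReal} (h1 : e ≠ ⊥) (h2 : e ≠ ⊤) : ∃ r : ℝ, e = ↑r := by
  induction e using EReal.rec with
  | bot => exact absurd rfl h1
  | coe r => exact ⟨r, rfl⟩
  | top => exact absurd rfl h2

lemma gamma0_exists_real {φ : X → EReal} (hφ : Gamma0 φ) : ∃ v, ∃ m : ℝ, φ v = ↑m := by
  obtain ⟨v, hv⟩ := hφ.2.1
  obtain ⟨r, hr⟩ := ereal_exists_real (hφ.1 v) hv
  exact ⟨v, r, hr⟩

lemma epi_closed {φ : X → EReal} (hφ : LowerSemicontinuous φ) :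
    IsClosed {p : X × ℝ | φ p.1 ≤ (p.2 : EReal)} := by
  rw [← isOpen_compl_iff, isOpen_iff_mem_nhds]
  rintro ⟨x, t⟩ hp
  simp only [Set.mem_compl_iff, Set.mem_setOf_eq, not_le] at hp
  obtain ⟨c, hc1, hc2⟩ := EReal.exists_between_coe_real hp
  have h1 : ∀ᶠ x' in 𝓝 x, (c : EReal) < φ x' := hφ x _ hc2
  have h2 : ∀ᶠ t' in 𝓝 t, t' < c := by
    apply eventually_nhds_iff.2 ⟨Set.Iio c, fun y hy => hy, isOpen_Iio, ?_⟩
    exact_mod_cast hc1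
  have h3 := h1.prod_mk h2
  rw [← nhds_prod_eq] at h3
  filter_upwards [h3] with q hq
  simp only [Set.mem_compl_iff, Set.mem_setOf_eq, not_le]
  exact lt_trans (by exact_mod_cast hq.2) hq.1

lemma epi_convex {φ : X → EReal} (hφ : Gamma0 φ) :
    Convex ℝ {p : X × ℝ | φ p.1 ≤ (p.2 : EReal)} := by
  rintro ⟨x₁, t₁⟩ h1 ⟨x₂, t₂⟩ h2 a b ha hb hab
  simp only [Set.mem_setOf_eq] at h1 h2 ⊢
  obtain ⟨m₁, hm₁⟩ := ereal_exists_real (hφ.1 x₁) (fun h => by simp [h] at h1)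
  obtain ⟨m₂, hm₂⟩ := ereal_exists_real (hφ.1 x₂) (fun h => by simp [h] at h2)
  rw [hm₁] at h1; rw [hm₂] at h2
  have hm₁' : m₁ ≤ t₁ := by exact_mod_cast h1
  have hm₂' : m₂ ≤ t₂ := by exact_mod_cast h2
  simp only [Prod.smul_mk, Prod.mk_add_mk, smul_eq_mul]
  calc φ (a • x₁ + b • x₂) ≤ (a : EReal) * φ x₁ + (b : EReal) * φ x₂ :=
        hφ.2.2.1 x₁ x₂ a b ha hb hab
    _ = ((a * m₁ + b * m₂ : ℝ) : EReal) := by rw [hm₁, hm₂]; exact_mod_cast rfl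
    _ ≤ ((a * t₁ + b * t₂ : ℝ) : EReal) := by
        exact_mod_cast add_le_add (mul_le_mul_of_nonneg_left hm₁' ha)
          (mul_le_mul_of_nonneg_left hm₂' hb)

/-- Separation of the epigraph from a point below the graph. -/
lemma epi_sep {φ : X → EReal}
    (hconv : Convex ℝ {p : X × ℝ | φ p.1 ≤ (p.2 : EReal)})
    (hcl : IsClosed {p : X × ℝ | φ p.1 ≤ (p.2 : EReal)})
    (v : X) (mv : ℝ) (hv : φ v = ↑mv)
    (x₀ : X) (r : ℝ) (hr : (r : EReal) < φ x₀) :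
    ∃ (g : X →L[ℝ] ℝ) (s u : ℝ),
      (∀ z (m : ℝ), φ z ≤ (m : EReal) → u < g z + m * s) ∧ g x₀ + r * s < u ∧ 0 ≤ s := by
  have hx : (x₀, r) ∉ {p : X × ℝ | φ p.1 ≤ (p.2 : EReal)} := fun h => absurd h (not_le.2 hr)
  obtain ⟨f, u, hfu, hE⟩ := geometric_hahn_banach_point_closed hconv hcl hx
  have hdec : ∀ (z : X) (m : ℝ), f (z, m) = f (z, 0) + m * f (0, 1) := by
    intro z m
    have : (z, m) = (z, (0:ℝ)) + m • ((0:X), (1:ℝ)) := by simp [Prod.ext_iff]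
    rw [this, map_add, map_smul, smul_eq_mul]
  set g : X →L[ℝ] ℝ := f.comp (ContinuousLinearMap.inl ℝ X ℝ) with hg
  have hgz : ∀ z : X, g z = f (z, 0) := fun z => rfl
  have h1 : ∀ z (m : ℝ), φ z ≤ (m : EReal) → u < g z + m * f (0,1) := by
    intro z m hzm
    have := hE (z, m) hzm
    rw [hdec z m] at this
    rw [hgz]; exact this
  have h2 : g x₀ + r * f (0,1) < u := by
    have := hfu; rw [hdec x₀ r] at this; rw [hgz]; exact this
  refine ⟨g, f (0,1), u, h1, h2, ?_⟩
  by_contra hs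
  push_neg at hs
  set s := f (0,1)
  have hs' : s ≠ 0 := ne_of_lt hs
  set n : ℝ := max 0 ((u - g v - mv * s)/s + 1) with hn
  have hn0 : (0:ℝ) ≤ n := le_max_left _ _
  have hnge : (u - g v - mv * s)/s + 1 ≤ n := le_max_right _ _
  have key := h1 v (mv + n) (by rw [hv]; exact_mod_cast by linarith)
  have hq : ((u - g v - mv * s)/s) * s = u - g v - mv * s := div_mul_cancel₀ _ hs'
  nlinarith [mul_le_mul_of_nonpos_right hnge (le_of_lt hs)]

/-- The positive-slope case of separation yields an affine minorant with value estimate. -/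
lemma scale_case {φ : X → EReal} (g : X →L[ℝ] ℝ) (s u : ℝ) (hs : 0 < s)
    (h1 : ∀ z (m : ℝ), φ z ≤ (m : EReal) → u < g z + m * s)
    (x₀ : X) (r : ℝ) (h2 : g x₀ + r * s < u) :
    ∃ (y : X →L[ℝ] ℝ) (c : ℝ),
      (∀ z (mz : ℝ), φ z = ↑mz → y z - mz ≤ c) ∧ r < y x₀ - c := by
  have hs' : s ≠ 0 := ne_of_gt hs
  refine ⟨(-s⁻¹) • g, -u/s, ?_, ?_⟩
  · intro z mz hz
    have hkey := h1 z mz (le_of_eq hz)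
    have hgz : ((-s⁻¹) • g) z = -s⁻¹ * g z := rfl
    have hinv : (0:ℝ) < s⁻¹ := inv_pos.2 hs
    have hd : -u/s = -(u * s⁻¹) := by rw [neg_div, div_eq_mul_inv]
    have hx : u * s⁻¹ < g z * s⁻¹ + mz := by
      have h6 := mul_lt_mul_of_pos_right hkey hinv
      rw [add_mul, mul_assoc, mul_inv_cancel₀ hs', mul_one] at h6
      exact h6
    rw [hgz, hd]; linarith
  · have hgz : ((-s⁻¹) • g) x₀ = -s⁻¹ * g x₀ := rfl
    have hinv : (0:ℝ) < s⁻¹ := inv_pos.2 hs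
    have hd : -u/s = -(u * s⁻¹) := by rw [neg_div, div_eq_mul_inv]
    have hx : g x₀ * s⁻¹ + r < u * s⁻¹ := by
      have h6 := mul_lt_mul_of_pos_right h2 hinv
      rw [add_mul, mul_assoc, mul_inv_cancel₀ hs', mul_one] at h6
      exact h6
    rw [hgz, hd]; linarith

lemma exists_minorant {φ : X → EReal} (hφ : Gamma0 φ) :
    ∃ (y : X →L[ℝ] ℝ) (c : ℝ), ∀ z (mz : ℝ), φ z = ↑mz → y z - mz ≤ c := by
  obtain ⟨v, mv, hv⟩ := gamma0_exists_real hφ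
  obtain ⟨g, s, u, h1, h2, hs0⟩ := epi_sep (epi_convex hφ) (epi_closed hφ.2.2.2) v mv hv v (mv - 1)
      (by rw [hv]; exact_mod_cast sub_one_lt mv)
  have hs : 0 < s := by
    rcases eq_or_lt_of_le hs0 with h | h
    · exfalso
      have h3 := h1 v mv (le_of_eq hv)
      rw [← h] at h3 h2
      simp at h3 h2
      linarith
    · exact h
  obtain ⟨y, c, hmin, _⟩ := scale_case g s u hs h1 v (mv - 1) h2
  exact ⟨y, c, hmin⟩

lemma exists_conj_gt {φ : X → EReal} (hφ : Gamma0 φ) (x₀ : X) (r : ℝ)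
    (hr : (r : EReal) < φ x₀) :
    ∃ (y : X →L[ℝ] ℝ) (c : ℝ),
      (∀ z (mz : ℝ), φ z = ↑mz → y z - mz ≤ c) ∧ r < y x₀ - c := by
  obtain ⟨v, mv, hv⟩ := gamma0_exists_real hφ
  obtain ⟨g, s, u, h1, h2, hs0⟩ := epi_sep (epi_convex hφ) (epi_closed hφ.2.2.2) v mv hv x₀ r hr
  rcases eq_or_lt_of_le hs0 with hs | hs
  · -- the degenerate case `s = 0`
    obtain ⟨y₀, c₀, hy₀⟩ := exists_minorant hφ
    have hgz : ∀ z (mz : ℝ), φ z = ↑mz → u < g z := by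
      intro z mz hz
      have h3 := h1 z mz (le_of_eq hz)
      rw [← hs] at h3; simpa using h3
    have hgx : g x₀ < u := by
      have h3 := h2; rw [← hs] at h3; simpa using h3
    set t : ℝ := u - g x₀ with ht
    have htp : 0 < t := by simp only [ht]; linarith
    set q : ℝ := r - (y₀ x₀ - c₀) with hq
    set lam : ℝ := max 0 ((q+1)/t) with hlam
    have hlam0 : 0 ≤ lam := le_max_left _ _
    have hlamt : q < lam * t := by
      rcases le_or_gt ((q+1)/t) 0 with h | h
      · have h4 : (q+1)/t * t ≤ 0 * t := mul_le_mul_of_nonneg_right h (le_of_lt htp)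
        rw [div_mul_cancel₀ _ (ne_of_gt htp), zero_mul] at h4
        have h5 : lam = 0 := max_eq_left h
        rw [h5]; nlinarith
      · have h5 : lam = (q+1)/t := max_eq_right (le_of_lt h)
        rw [h5, div_mul_cancel₀ _ (ne_of_gt htp)]; linarith
    refine ⟨y₀ - lam • g, c₀ - lam * u, ?_, ?_⟩
    · intro z mz hz
      have h3 := hy₀ z mz hz
      have h4 := hgz z mz hz
      have h5 : (y₀ - lam • g) z = y₀ z - lam * g z := rfl
      rw [h5]
      nlinarith [mul_le_mul_of_nonneg_left (le_of_lt h4) hlam0]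
    · have h5 : (y₀ - lam • g) x₀ = y₀ x₀ - lam * g x₀ := rfl
      rw [h5]
      nlinarith
  · obtain ⟨y, c, hmin, hgt⟩ := scale_case g s u hs h1 x₀ r h2
    exact ⟨y, c, hmin, hgt⟩

lemma fenchel_young (φ : X → EReal) (y : X →L[ℝ] ℝ) (x : X) :
    (y x : EReal) - φ x ≤ fenchelConj φ y :=
  le_iSup (fun x => (y x : EReal) - φ x) x

lemma conj_le_of_minorant {φ : X → EReal} (hbot : ∀ v, φ v ≠ ⊥) {y : X →L[ℝ] ℝ} {c : ℝ}
    (h : ∀ z (mz : ℝ), φ z = ↑mz → y z - mz ≤ c) : fenchelConj φ y ≤ (c : EReal) := by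
  apply iSup_le
  intro z
  by_cases hz : φ z = ⊤
  · rw [hz]
    simp
  · obtain ⟨m, hm⟩ := ereal_exists_real (hbot z) hz
    rw [hm, ← EReal.coe_sub]
    exact_mod_cast h z m hm

lemma conj_ne_bot {φ : X → EReal} (hφ : Gamma0 φ) (y : X →L[ℝ] ℝ) :
    fenchelConj φ y ≠ ⊥ := by
  obtain ⟨v, m, hv⟩ := gamma0_exists_real hφ
  have h1 : ((y v - m : ℝ) : EReal) ≤ fenchelConj φ y := by
    have := fenchel_young φ y v
    rw [hv, ← EReal.coe_sub] at this
    exact this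
  intro h
  rw [h] at h1
  exact EReal.coe_ne_bot _ (le_bot_iff.1 h1)

lemma subdiff_phi_real {φ : X → EReal} (hφ : Gamma0 φ) {x : X} {u : X →L[ℝ] ℝ}
    (hu : u ∈ subdiff φ x) : ∃ a : ℝ, φ x = ↑a := by
  refine ereal_exists_real (hφ.1 x) ?_
  intro htop
  obtain ⟨v, m, hv⟩ := gamma0_exists_real hφ
  have h3 := hu v
  rw [htop, hv, ereal_coe_add_top] at h3
  exact ereal_top_not_le_coe _ h3

/-- Easy direction: a subgradient of `φ` at `x` has `x` as subgradient of `φ*`. -/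
lemma mem_subdiffStar_of_mem_subdiff {φ : X → EReal} (hφ : Gamma0 φ) {x : X} {u : X →L[ℝ] ℝ}
    (hu : u ∈ subdiff φ x) : x ∈ subdiffStar (fenchelConj φ) u := by
  obtain ⟨a, ha⟩ := subdiff_phi_real hφ hu
  have hconj : fenchelConj φ u = ((u x - a : ℝ) : EReal) := by
    apply le_antisymm
    · apply iSup_le
      intro z
      by_cases hz : φ z = ⊤
      · rw [hz]; simp
      · obtain ⟨m, hm⟩ := ereal_exists_real (hφ.1 z) hz
        have h3 := hu z
        rw [ha, hm] at h3
        have h4 : u (z - x) + a ≤ m := by exact_mod_cast h3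
        rw [map_sub] at h4
        rw [hm, ← EReal.coe_sub]
        exact_mod_cast by linarith
    · have := fenchel_young φ u x
      rw [ha, ← EReal.coe_sub] at this
      exact this
  intro z
  rw [hconj]
  have h5 : ((z - u) x : ℝ) = z x - u x := rfl
  rw [h5, ← EReal.coe_add]
  have h6 : (z x - u x) + (u x - a) = z x - a := by ring
  rw [h6]
  have := fenchel_young φ z x
  rw [ha, ← EReal.coe_sub] at this
  exact this

/-- Hard direction (via Fenchel–Moreau): if `x ∈ ∂φ*(u)` then `u ∈ ∂φ(x)`. -/
lemma mem_subdiff_of_mem_subdiffStar {φ : X → EReal} (hφ : Gamma0 φ) {x : X} {u : X →L[ℝ] ℝ}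
    (hx : x ∈ subdiffStar (fenchelConj φ) u) : u ∈ subdiff φ x := by
  obtain ⟨y₀, c₀, hy₀⟩ := exists_minorant hφ
  have hψ₀ : fenchelConj φ y₀ ≤ (c₀ : EReal) := conj_le_of_minorant hφ.1 hy₀
  -- `φ* u` is a real number
  have hne : fenchelConj φ u ≠ ⊤ := by
    intro htop
    have h3 := hx y₀
    rw [htop] at h3
    rw [ereal_coe_add_top] at h3
    exact ereal_top_not_le_coe _ (le_trans h3 hψ₀)
  obtain ⟨b, hb⟩ := ereal_exists_real (conj_ne_bot hφ u) hne
  -- Fenchel–Moreau: `φ x ≤ u x - b`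
  have hphix : φ x ≤ ((u x - b : ℝ) : EReal) := by
    by_contra hlt
    push_neg at hlt
    obtain ⟨y, c, hmin, hyc⟩ := exists_conj_gt hφ x (u x - b) hlt
    have hψy : fenchelConj φ y ≤ (c : EReal) := conj_le_of_minorant hφ.1 hmin
    have h3 := hx y
    rw [hb] at h3
    rw [show (((y - u) x : ℝ)) = y x - u x from rfl, ← EReal.coe_add] at h3
    have h5 : ((y x - u x + b : ℝ) : EReal) ≤ (c : EReal) := le_trans h3 hψy
    have h6 : y x - u x + b ≤ c := by exact_mod_cast h5
    linarith
  obtain ⟨a, ha⟩ := ereal_exists_real (hφ.1 x)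
    (fun h => by rw [h] at hphix; exact ereal_top_not_le_coe _ hphix)
  have haub : a ≤ u x - b := by rw [ha] at hphix; exact_mod_cast hphix
  intro z
  by_cases hz : φ z = ⊤
  · rw [hz]; exact le_top
  · obtain ⟨m, hm⟩ := ereal_exists_real (hφ.1 z) hz
    have hFY : ((u z - m : ℝ) : EReal) ≤ (b : EReal) := by
      have := fenchel_young φ u z
      rw [hm, ← EReal.coe_sub, hb] at this
      exact this
    have h7 : u z - m ≤ b := by exact_mod_cast hFY
    rw [ha, hm, map_sub, ← EReal.coe_add]
    exact_mod_cast by linarith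


lemma convex_subdiff {φ : X → EReal} (hφ : Gamma0 φ) (x : X) :
    Convex ℝ (subdiff φ x) := by
  intro u₁ h₁ u₂ h₂ s t hs ht hst
  obtain ⟨a, ha⟩ := subdiff_phi_real hφ h₁
  intro z
  by_cases hz : φ z = ⊤
  · rw [hz]; exact le_top
  obtain ⟨m, hm⟩ := ereal_exists_real (hφ.1 z) hz
  have e1 := h₁ z
  have e2 := h₂ z
  rw [ha, hm, ← EReal.coe_add] at e1 e2
  have r1 : u₁ (z - x) + a ≤ m := by exact_mod_cast e1
  have r2 : u₂ (z - x) + a ≤ m := by exact_mod_cast e2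
  have happ : (s • u₁ + t • u₂) (z - x) = s * u₁ (z - x) + t * u₂ (z - x) := rfl
  rw [ha, hm, happ, ← EReal.coe_add]
  have h3 := add_le_add (mul_le_mul_of_nonneg_left r1 hs) (mul_le_mul_of_nonneg_left r2 ht)
  have h4 : s * a + t * a = a := by rw [← add_mul, hst, one_mul]
  have h5 : s * m + t * m = m := by rw [← add_mul, hst, one_mul]
  exact_mod_cast by linarith

lemma isClosed_levelset {e₁ e₂ : EReal} (h₁ : e₁ ≠ ⊥) (h₂ : e₂ ≠ ⊥) :
    IsClosed {r : ℝ | (r : EReal) + e₁ ≤ e₂} := by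
  by_cases hz : e₂ = ⊤
  · have : {r : ℝ | (r : EReal) + e₁ ≤ e₂} = Set.univ := by
      ext r; simp [hz]
    rw [this]; exact isClosed_univ
  obtain ⟨m, hm⟩ := ereal_exists_real h₂ hz
  by_cases hx : e₁ = ⊤
  · have : {r : ℝ | (r : EReal) + e₁ ≤ e₂} = ∅ := by
      ext r
      simp only [Set.mem_setOf_eq, Set.mem_empty_iff_false, iff_false, not_le, hx, hm,
        ereal_coe_add_top]
      exact lt_of_le_of_ne le_top (by simp)
    rw [this]; exact isClosed_empty
  obtain ⟨a, hax⟩ := ereal_exists_real h₁ hx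
  have : {r : ℝ | (r : EReal) + e₁ ≤ e₂} = {r : ℝ | r + a ≤ m} := by
    ext r
    rw [Set.mem_setOf_eq, Set.mem_setOf_eq, hax, hm, ← EReal.coe_add, EReal.coe_le_coe_iff]
  rw [this]
  exact isClosed_le (continuous_id.add continuous_const) continuous_const

lemma isClosed_subdiff_add_ball {φ : X → EReal} (hφ : Gamma0 φ) (x : X) (ε : ℝ) :
    IsClosed (subdiff φ x + Metric.closedBall (0 : X →L[ℝ] ℝ) ε) := by
  set Sw : Set (WeakDual ℝ X) := ⇑WeakDual.toStrongDual ⁻¹' (subdiff φ x) with hSw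
  set Kw : Set (WeakDual ℝ X) :=
    ⇑WeakDual.toStrongDual ⁻¹' (Metric.closedBall (0 : StrongDual ℝ X) ε) with hKw
  have hK : IsCompact Kw := WeakDual.isCompact_closedBall (𝕜 := ℝ) (E := X) 0 ε
  have hS : IsClosed Sw := by
    have hrep : Sw = ⋂ z : X,
        (fun w : WeakDual ℝ X => w (z - x)) ⁻¹' {r : ℝ | (r : EReal) + φ x ≤ φ z} := by
      ext w
      simp only [hSw, Set.mem_iInter, Set.mem_preimage, Set.mem_setOf_eq, subdiff]
      exact Iff.rfl
    rw [hrep]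
    exact isClosed_iInter fun z =>
      IsClosed.preimage (WeakDual.eval_continuous (z - x)) (isClosed_levelset (hφ.1 x) (hφ.1 z))
  have hsum : IsClosed (Kw + Sw) := hS.add_left_of_isCompact hK
  have h2 : (⇑WeakDual.toStrongDual ⁻¹'
      (subdiff φ x + Metric.closedBall (0 : StrongDual ℝ X) ε) : Set (WeakDual ℝ X)) = Kw + Sw := by
    ext w
    simp only [Set.mem_preimage, Set.mem_add, hSw, hKw]
    constructor
    · rintro ⟨p, hp, b, hb, hpb⟩
      exact ⟨b, hb, p, hp, (add_comm b p).trans hpb⟩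
    · rintro ⟨b, hb, p, hp, hpb⟩
      exact ⟨p, hp, b, hb, (add_comm p b).trans hpb⟩
  have h3 : IsClosed (⇑WeakDual.toStrongDual ⁻¹'
      (subdiff φ x + Metric.closedBall (0 : StrongDual ℝ X) ε) : Set (WeakDual ℝ X)) := by
    rw [h2]; exact hsum
  have h4 : subdiff φ x + Metric.closedBall (0 : StrongDual ℝ X) ε =
      ⇑StrongDual.toWeakDual ⁻¹' (⇑WeakDual.toStrongDual ⁻¹'
        (subdiff φ x + Metric.closedBall (0 : StrongDual ℝ X) ε)) := rfl
  rw [h4]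
  exact h3.preimage NormedSpace.Dual.toWeakDual_continuous

lemma isClosed_sectionStar {φ : X → EReal} (hφ : Gamma0 φ) {ε : ℝ} (hε : 0 < ε)
    (y : X →L[ℝ] ℝ) :
    IsClosed {x : X | ∃ u ∈ subdiff φ x, ‖y - u‖ ≤ ε} := by
  apply IsSeqClosed.isClosed
  intro xs x hxs hlim
  choose us hus hnus using hxs
  set Kw : Set (WeakDual ℝ X) := ⇑WeakDual.toStrongDual ⁻¹' (Metric.closedBall y ε) with hKw
  have hK : IsCompact Kw := WeakDual.isCompact_closedBall (𝕜 := ℝ) (E := X) y ε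
  have hmem : ∀ n, (StrongDual.toWeakDual (us n)) ∈ Kw := by
    intro n
    show us n ∈ Metric.closedBall y ε
    rw [Metric.mem_closedBall, dist_eq_norm, norm_sub_rev]
    exact hnus n
  obtain ⟨u, huK, hclu⟩ := hK.exists_mapClusterPt (f := atTop) (u := fun n => StrongDual.toWeakDual (us n))
      (le_principal_iff.2 (mem_map.2 (univ_mem' hmem)))
  set u' : StrongDual ℝ X := WeakDual.toStrongDual u with hu'
  refine ⟨u', ?_, ?_⟩
  swap
  · have : u' ∈ Metric.closedBall y ε := huK
    rw [Metric.mem_closedBall, dist_eq_norm, norm_sub_rev] at this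
    exact this
  intro z
  by_cases hz : φ z = ⊤
  · rw [hz]; exact le_top
  obtain ⟨m, hm⟩ := ereal_exists_real (hφ.1 z) hz
  have hreal : ∀ n, ∃ a : ℝ, φ (xs n) = ↑a := fun n => subdiff_phi_real hφ (hus n)
  choose as has using hreal
  have hineq : ∀ n, us n (z - xs n) + as n ≤ m := by
    intro n
    have h3 := hus n z
    rw [has n, hm, ← EReal.coe_add] at h3
    exact_mod_cast h3
  set B : ℝ := ‖y‖ + ε with hB
  have hBpos : 0 < B := by positivity
  have hnormus : ∀ n, ‖us n‖ ≤ B := by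
    intro n
    have h3 : us n = y - (y - us n) := by abel
    rw [h3]
    exact (norm_sub_le _ _).trans (by have := hnus n; rw [hB]; linarith)
  have key : ∀ c : ℝ, (c : EReal) < φ x → c ≤ m - u' (z - x) := by
    intro c hc
    apply le_of_forall_pos_le_add
    intro δ hδ
    have ev1 : ∀ᶠ n in atTop, c < as n := by
      have h3 := hφ.2.2.2 x (↑c) hc
      filter_upwards [hlim.eventually h3] with n hn
      rw [has n] at hn
      exact_mod_cast hn
    have ev2 : ∀ᶠ n in atTop, ‖x - xs n‖ < δ / (2 * B) := by
      have h0 : Filter.Tendsto (fun n => ‖x - xs n‖) atTop (𝓝 0) := by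
        have h4 := (hlim.const_sub x).norm
        rw [sub_self, norm_zero] at h4
        exact h4
      exact h0.eventually_lt_const (by positivity)
    have freq : ∃ᶠ n in atTop, |us n (z - x) - u' (z - x)| < δ / 2 := by
      have hV : {w : WeakDual ℝ X | |w (z - x) - u' (z - x)| < δ / 2} ∈ 𝓝 u := by
        have hcont : Continuous fun w : WeakDual ℝ X => w (z - x) :=
          WeakDual.eval_continuous _
        have hb : Metric.ball (u' (z - x)) (δ / 2) ∈ 𝓝 ((fun w : WeakDual ℝ X => w (z - x)) u) :=
          Metric.ball_mem_nhds _ (by linarith)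
        have h5 := hcont.continuousAt (x := u) hb
        refine Filter.mem_of_superset h5 ?_
        intro w hw
        have h6 := Metric.mem_ball.1 hw
        rw [Real.dist_eq] at h6
        exact h6
      exact (mapClusterPt_iff_frequently.1 hclu) _ hV
    obtain ⟨n, hn1, hn2, hn3⟩ := (freq.and_eventually (ev1.and ev2)).exists
    have hsplit : us n (z - xs n) = us n (z - x) + us n (x - xs n) := by
      rw [← map_add]
      congr 1
      abel
    have hb2 : |us n (x - xs n)| ≤ B * ‖x - xs n‖ := by
      calc |us n (x - xs n)| ≤ ‖us n‖ * ‖x - xs n‖ := (us n).le_opNorm _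
        _ ≤ B * ‖x - xs n‖ := mul_le_mul_of_nonneg_right (hnormus n) (norm_nonneg _)
    have hb3 : B * ‖x - xs n‖ < δ / 2 := by
      have h6 := mul_lt_mul_of_pos_left hn3 hBpos
      have h7 : B * (δ / (2 * B)) = δ / 2 := by field_simp
      rw [h7] at h6
      exact h6
    have ha1 := abs_lt.1 hn1
    have ha2 := abs_lt.1 (lt_of_le_of_lt hb2 hb3)
    have h8 := hineq n
    rw [hsplit] at h8
    linarith
  have hφx : φ x ≤ ((m - u' (z - x) : ℝ) : EReal) := by
    by_contra hgt
    push_neg at hgt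
    obtain ⟨c, hc1, hc2⟩ := EReal.exists_between_coe_real hgt
    have h9 := key c hc2
    have h10 : m - u' (z - x) < c := by exact_mod_cast hc1
    linarith
  rw [hm]
  calc ((u' (z - x) : ℝ) : EReal) + φ x ≤ ↑(u' (z - x)) + ↑(m - u' (z - x)) :=
        add_le_add_right hφx _
    _ = (m : EReal) := by rw [← EReal.coe_add]; norm_num

open scoped Pointwise in
/-- `M + A` is a BB-graph iff for every `y` the set
`⋃_{‖y' - y‖ ≤ ε} ∂φ*(y')` is convex. -/
theorem blurred_BBGraph_iff [CompleteSpace X]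
    (hrefl : Function.Surjective (NormedSpace.inclusionInDoubleDual ℝ X))
    (φ : X → EReal) (hφ : Gamma0 φ) (ε : ℝ) (hε : 0 < ε)
    (M A : Set (X × (X →L[ℝ] ℝ)))
    (hM : M = {q | q.2 ∈ subdiff φ q.1})
    (hA : A = {0} ×ˢ Metric.closedBall 0 ε) :
    IsBBGraph (M + A) ↔
      ∀ y : X →L[ℝ] ℝ,
        Convex ℝ (⋃ y' ∈ Metric.closedBall y ε, subdiffStar (fenchelConj φ) y') := by
  subst hM hA
  set S : Set (X × (X →L[ℝ] ℝ)) :=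
    {q : X × (X →L[ℝ] ℝ) | q.2 ∈ subdiff φ q.1} +
      ({0} ×ˢ Metric.closedBall 0 ε : Set (X × (X →L[ℝ] ℝ))) with hS
  have mem_MA : ∀ (x : X) (w : X →L[ℝ] ℝ),
      (x, w) ∈ S ↔ ∃ u ∈ subdiff φ x, ‖w - u‖ ≤ ε := by
    intro x w
    rw [hS, Set.mem_add]
    constructor
    · rintro ⟨p, hp, q, hq, hpq⟩
      rw [Set.mem_prod, Set.mem_singleton_iff] at hq
      have h1 : p.1 + q.1 = x := congrArg Prod.fst hpq
      have h2 : p.2 + q.2 = w := congrArg Prod.snd hpq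
      rw [hq.1, add_zero] at h1
      refine ⟨p.2, by rw [← h1]; exact hp, ?_⟩
      have h3 : w - p.2 = q.2 := by rw [← h2]; abel
      rw [h3]
      exact mem_closedBall_zero_iff.1 hq.2
    · rintro ⟨u, hu, hn⟩
      refine ⟨(x, u), hu, (0, w - u), ⟨rfl, mem_closedBall_zero_iff.2 hn⟩, ?_⟩
      rw [Prod.ext_iff]
      constructor
      · show x + 0 = x; rw [add_zero]
      · show u + (w - u) = w; abel
  have hsec1 : ∀ x : X, {w : X →L[ℝ] ℝ | (x, w) ∈ S} =
      subdiff φ x + Metric.closedBall 0 ε := by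
    intro x
    ext w
    rw [Set.mem_setOf_eq, mem_MA x w, Set.mem_add]
    constructor
    · rintro ⟨u, hu, hn⟩
      exact ⟨u, hu, w - u, mem_closedBall_zero_iff.2 hn, by abel⟩
    · rintro ⟨u, hu, b, hb, hub⟩
      refine ⟨u, hu, ?_⟩
      have h3 : w - u = b := by rw [← hub]; abel
      rw [h3]
      exact mem_closedBall_zero_iff.1 hb
  have hsec2 : ∀ w : X →L[ℝ] ℝ, {x : X | (x, w) ∈ S} =
      ⋃ y' ∈ Metric.closedBall w ε, subdiffStar (fenchelConj φ) y' := by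
    intro w
    ext x
    rw [Set.mem_setOf_eq, mem_MA x w]
    simp only [Set.mem_iUnion, exists_prop]
    constructor
    · rintro ⟨u, hu, hn⟩
      refine ⟨u, ?_, mem_subdiffStar_of_mem_subdiff hφ hu⟩
      rw [Metric.mem_closedBall, dist_eq_norm, norm_sub_rev]
      exact hn
    · rintro ⟨u, hball, hmem⟩
      refine ⟨u, mem_subdiff_of_mem_subdiffStar hφ hmem, ?_⟩
      rw [Metric.mem_closedBall, dist_eq_norm] at hball
      rw [norm_sub_rev]
      exact hball
  constructor
  · intro h w
    rw [← hsec2 w]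
    exact (h.2 w).1
  · intro h
    refine ⟨fun x => ⟨?_, ?_⟩, fun w => ⟨?_, ?_⟩⟩
    · rw [hsec1 x]
      exact (convex_subdiff hφ x).add (convex_closedBall 0 ε)
    · rw [hsec1 x]
      exact isClosed_subdiff_add_ball hφ x ε
    · rw [hsec2 w]
      exact h w
    · have h4 : {x : X | (x, w) ∈ S} = {x : X | ∃ u ∈ subdiff φ x, ‖w - u‖ ≤ ε} := by
        ext x
        exact mem_MA x w
      rw [h4]
      exact isClosed_sectionStar hφ hε w
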